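/- Let e₁, e₂, e₃, e₄ be the standard orthonormal basis of ℂ⁴ (i.e., of EuclideanSpace ℂ (Fin 4)), and set p = span{e₁, e₂}, q = pᗮ, r = span{e₁, e₂ + e₃}, s = span{e₁, e₃ + e₄}. Then β(p,q,r,s) = span{e₄}; in particular β(p,q,r,s) ≠ ⊥, so there exist subspaces p, q, r, s of ℂ⁴ with β(p,q,r,s) ≠ ⊥. -/

import Mathlib

/-- The distributivity test formula `α(p,q,r) = (a ⊔ b) ⊓ (aᗮ ⊔ bᗮ)` where
`a = p ⊔ (q ⊓ r)` and `b = (p ⊔ q) ⊓ (p ⊔ r)`. -/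
noncomputable def distribTest {E : Type*} [NormedAddCommGroup E] [InnerProductSpace ℂ E]
    (p q r : Submodule ℂ E) : Submodule ℂ E :=
  ((p ⊔ (q ⊓ r)) ⊔ ((p ⊔ q) ⊓ (p ⊔ r))) ⊓ ((p ⊔ (q ⊓ r))ᗮ ⊔ ((p ⊔ q) ⊓ (p ⊔ r))ᗮ)

/-- The formula `β(p,q,r,s) = α(α(p,q,r), α(p,q,r)ᗮ ⊓ pᗮ, s)`. -/
noncomputable def betaTest {E : Type*} [NormedAddCommGroup E] [InnerProductSpace ℂ E]
    (p q r s : Submodule ℂ E) : Submodule ℂ E :=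
  distribTest (distribTest p q r) ((distribTest p q r)ᗮ ⊓ pᗮ) s

namespace BetaAux

open Submodule
open scoped InnerProductSpace

local notation "V" => EuclideanSpace ℂ (Fin 4)

noncomputable abbrev E (i : Fin 4) : V := EuclideanSpace.single i (1:ℂ)

lemma mem_orthogonal_span_iff (S : Set V) (v : V) :
    v ∈ (Submodule.span ℂ S)ᗮ ↔ ∀ u ∈ S, ⟪u, v⟫_ℂ = 0 := by
  constructor
  · exact fun h u hu => (Submodule.mem_orthogonal _ v).1 h u (Submodule.subset_span hu)
  · intro h
    rw [Submodule.mem_orthogonal]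
    intro u hu
    induction hu using Submodule.span_induction with
    | mem u hu => exact h u hu
    | zero => simp
    | add u w _ _ h1 h2 => simp [inner_add_left, h1, h2]
    | smul c u _ h1 => simp [inner_smul_left, h1]

/-- char of p -/
lemma mem_P (x : V) : x ∈ Submodule.span ℂ {E 0, E 1} ↔ x 2 = 0 ∧ x 3 = 0 := by
  rw [Submodule.mem_span_pair]
  constructor
  · rintro ⟨a, b, rfl⟩; simp [EuclideanSpace.single_apply]
  · rintro ⟨h2, h3⟩
    exact ⟨x 0, x 1, by ext j; fin_cases j <;> simp [EuclideanSpace.single_apply, h2, h3]⟩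

/-- char of pᗮ -/
lemma mem_Q (x : V) : x ∈ (Submodule.span ℂ {E 0, E 1})ᗮ ↔ x 0 = 0 ∧ x 1 = 0 := by
  rw [mem_orthogonal_span_iff]
  simp [EuclideanSpace.inner_single_left]

/-- char of r -/
lemma mem_R (x : V) : x ∈ Submodule.span ℂ {E 0, E 1 + E 2} ↔ x 1 = x 2 ∧ x 3 = 0 := by
  rw [Submodule.mem_span_pair]
  constructor
  · rintro ⟨a, b, rfl⟩; simp [EuclideanSpace.single_apply]
  · rintro ⟨h1, h3⟩
    exact ⟨x 0, x 1, by ext j; fin_cases j <;> simp [EuclideanSpace.single_apply, h1, h3]⟩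

/-- char of s -/
lemma mem_S (x : V) : x ∈ Submodule.span ℂ {E 0, E 2 + E 3} ↔ x 1 = 0 ∧ x 2 = x 3 := by
  rw [Submodule.mem_span_pair]
  constructor
  · rintro ⟨a, b, rfl⟩; simp [EuclideanSpace.single_apply]
  · rintro ⟨h1, h23⟩
    exact ⟨x 0, x 2, by ext j; fin_cases j <;> simp [EuclideanSpace.single_apply, h1, h23]⟩

/-- char of p ⊔ r -/
lemma mem_PR (x : V) :
    x ∈ Submodule.span ℂ {E 0, E 1} ⊔ Submodule.span ℂ {E 0, E 1 + E 2} ↔ x 3 = 0 := by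
  rw [Submodule.mem_sup]
  constructor
  · rintro ⟨y, hy, z, hz, rfl⟩
    rw [mem_P] at hy; rw [mem_R] at hz
    simp [hy.2, hz.2]
  · intro h3
    refine ⟨x - x 2 • (E 1 + E 2), ?_, x 2 • (E 1 + E 2), ?_, by abel⟩
    · rw [mem_P]; simp [EuclideanSpace.single_apply, h3]
    · rw [mem_R]; simp [EuclideanSpace.single_apply]

/-- char of (p ⊔ r)ᗮ -/
lemma mem_PRo (x : V) :
    x ∈ (Submodule.span ℂ {E 0, E 1} ⊔ Submodule.span ℂ {E 0, E 1 + E 2})ᗮ ↔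
      x 0 = 0 ∧ x 1 = 0 ∧ x 2 = 0 := by
  rw [← Submodule.span_union, mem_orthogonal_span_iff]
  constructor
  · intro h
    have h0 := h (E 0) (by simp)
    have h1 := h (E 1) (by simp)
    have h2 := h (E 1 + E 2) (by simp)
    simp [EuclideanSpace.inner_single_left, inner_add_left] at h0 h1 h2
    exact ⟨h0, h1, by linear_combination h2 - h1⟩
  · rintro ⟨h0, h1, h2⟩ u hu
    simp only [Set.mem_union, Set.mem_insert_iff, Set.mem_singleton_iff] at hu
    rcases hu with (rfl | rfl) | (rfl | rfl) <;>
      simp [EuclideanSpace.inner_single_left, inner_add_left, h0, h1, h2]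

/-- char of t = span{e2} -/
lemma mem_T (x : V) : x ∈ Submodule.span ℂ {E 2} ↔ x 0 = 0 ∧ x 1 = 0 ∧ x 3 = 0 := by
  rw [Submodule.mem_span_singleton]
  constructor
  · rintro ⟨a, rfl⟩; simp [EuclideanSpace.single_apply]
  · rintro ⟨h0, h1, h3⟩
    exact ⟨x 2, by ext j; fin_cases j <;> simp [EuclideanSpace.single_apply, h0, h1, h3]⟩

lemma mem_To (x : V) : x ∈ (Submodule.span ℂ {E 2})ᗮ ↔ x 2 = 0 := by
  rw [mem_orthogonal_span_iff]
  simp [EuclideanSpace.inner_single_left]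

/-- char of span{e3} -/
lemma mem_U (x : V) : x ∈ Submodule.span ℂ {E 3} ↔ x 0 = 0 ∧ x 1 = 0 ∧ x 2 = 0 := by
  rw [Submodule.mem_span_singleton]
  constructor
  · rintro ⟨a, rfl⟩; simp [EuclideanSpace.single_apply]
  · rintro ⟨h0, h1, h2⟩
    exact ⟨x 3, by ext j; fin_cases j <;> simp [EuclideanSpace.single_apply, h0, h1, h2]⟩

/-- char of span{e2,e3} -/
lemma mem_W (x : V) : x ∈ Submodule.span ℂ {E 2, E 3} ↔ x 0 = 0 ∧ x 1 = 0 := by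
  rw [Submodule.mem_span_pair]
  constructor
  · rintro ⟨a, b, rfl⟩; simp [EuclideanSpace.single_apply]
  · rintro ⟨h0, h1⟩
    exact ⟨x 2, x 3, by ext j; fin_cases j <;> simp [EuclideanSpace.single_apply, h0, h1]⟩

lemma mem_Wo (x : V) : x ∈ (Submodule.span ℂ {E 2, E 3})ᗮ ↔ x 2 = 0 ∧ x 3 = 0 := by
  rw [mem_orthogonal_span_iff]
  simp [EuclideanSpace.inner_single_left]

/-- char of t ⊔ s -/
lemma mem_TS (x : V) :
    x ∈ Submodule.span ℂ {E 2} ⊔ Submodule.span ℂ {E 0, E 2 + E 3} ↔ x 1 = 0 := by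
  rw [Submodule.mem_sup]
  constructor
  · rintro ⟨y, hy, z, hz, rfl⟩
    rw [mem_T] at hy; rw [mem_S] at hz
    simp [hy.2.1, hz.1]
  · intro h1
    refine ⟨x - (x 0 • E 0 + x 3 • (E 2 + E 3)), ?_, x 0 • E 0 + x 3 • (E 2 + E 3), ?_, by abel⟩
    · rw [mem_T]; simp [EuclideanSpace.single_apply, h1]
    · rw [Submodule.mem_span_pair]; exact ⟨x 0, x 3, rfl⟩

-- step 1 : α(p,q,r) = span{e2}
lemma alpha_eq :
    distribTest (Submodule.span ℂ {E 0, E 1}) (Submodule.span ℂ {E 0, E 1})ᗮ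
      (Submodule.span ℂ {E 0, E 1 + E 2}) = Submodule.span ℂ {E 2} := by
  set P := Submodule.span ℂ {E 0, E 1}
  set R := Submodule.span ℂ {E 0, E 1 + E 2}
  have hQR : Pᗮ ⊓ R = ⊥ := by
    rw [eq_bot_iff]
    intro x hx
    have h1 := (mem_Q x).1 hx.1
    have h2 := (mem_R x).1 hx.2
    have : x = 0 := by
      ext j; fin_cases j <;>
        simp_all
    simp [this]
  have hPQ : P ⊔ Pᗮ = ⊤ := Submodule.sup_orthogonal_of_hasOrthogonalProjection
  rw [distribTest, hQR, hPQ, sup_bot_eq, top_inf_eq,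
    sup_eq_right.2 (le_sup_left : P ≤ P ⊔ R),
    sup_eq_left.2 (Submodule.orthogonal_le (le_sup_left : P ≤ P ⊔ R))]
  ext x
  rw [Submodule.mem_inf, mem_PR, mem_Q, mem_T]
  tauto

lemma u_eq :
    (Submodule.span ℂ {E 2})ᗮ ⊓ (Submodule.span ℂ {E 0, E 1})ᗮ = Submodule.span ℂ {E 3} := by
  ext x
  rw [Submodule.mem_inf, mem_To, mem_Q, mem_U]
  tauto

-- step 2 : α(t, u, s) = span{e3}
lemma beta_step :
    distribTest (Submodule.span ℂ {E 2}) (Submodule.span ℂ {E 3})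
      (Submodule.span ℂ {E 0, E 2 + E 3}) = Submodule.span ℂ {E 3} := by
  set T := Submodule.span ℂ ({E 2} : Set V)
  set U := Submodule.span ℂ ({E 3} : Set V)
  set S := Submodule.span ℂ {E 0, E 2 + E 3}
  have hUS : U ⊓ S = ⊥ := by
    rw [eq_bot_iff]
    intro x hx
    have h1 := (mem_U x).1 hx.1
    have h2 := (mem_S x).1 hx.2
    have : x = 0 := by
      ext j; fin_cases j <;> simp_all
    simp [this]
  have hb : (T ⊔ U) ⊓ (T ⊔ S) = Submodule.span ℂ {E 2, E 3} := by
    have hTU : T ⊔ U = Submodule.span ℂ {E 2, E 3} := by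
      rw [← Submodule.span_union]
      congr 1
    rw [hTU]
    ext x
    rw [Submodule.mem_inf, mem_W, mem_TS]
    tauto
  have hTW : T ≤ Submodule.span ℂ {E 2, E 3} :=
    Submodule.span_mono (by simp)
  rw [distribTest, hUS, sup_bot_eq, hb, sup_eq_right.2 hTW,
    sup_eq_left.2 (Submodule.orthogonal_le hTW)]
  ext x
  rw [Submodule.mem_inf, mem_W, mem_To, mem_U]
  tauto

lemma beta_eq :
    betaTest (Submodule.span ℂ {E 0, E 1}) (Submodule.span ℂ {E 0, E 1})ᗮ
      (Submodule.span ℂ {E 0, E 1 + E 2}) (Submodule.span ℂ {E 0, E 2 + E 3}) =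
      Submodule.span ℂ {E 3} := by
  rw [betaTest, alpha_eq, u_eq, beta_step]

lemma span_e3_ne_bot : Submodule.span ℂ {E 3} ≠ ⊥ := by
  simp only [ne_eq, Submodule.span_singleton_eq_bot]
  intro h
  have := congrFun (congrArg (fun v : V => (v : Fin 4 → ℂ)) h) 3
  simp [EuclideanSpace.single_apply] at this

end BetaAux

theorem beta_ne_bot_on_C4 :
    (let e : Fin 4 → EuclideanSpace ℂ (Fin 4) := fun i => EuclideanSpace.single i (1 : ℂ)
     let p : Submodule ℂ (EuclideanSpace ℂ (Fin 4)) := Submodule.span ℂ {e 0, e 1}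
     let q : Submodule ℂ (EuclideanSpace ℂ (Fin 4)) := pᗮ
     let r : Submodule ℂ (EuclideanSpace ℂ (Fin 4)) := Submodule.span ℂ {e 0, e 1 + e 2}
     let s : Submodule ℂ (EuclideanSpace ℂ (Fin 4)) := Submodule.span ℂ {e 0, e 2 + e 3}
     betaTest p q r s = Submodule.span ℂ {e 3} ∧ betaTest p q r s ≠ ⊥) ∧
    ∃ p q r s : Submodule ℂ (EuclideanSpace ℂ (Fin 4)), betaTest p q r s ≠ ⊥ := by
  refine ⟨⟨BetaAux.beta_eq, ?_⟩, ?_⟩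
  · rw [BetaAux.beta_eq]; exact BetaAux.span_e3_ne_bot
  · exact ⟨_, _, _, _, by rw [BetaAux.beta_eq]; exact BetaAux.span_e3_ne_bot⟩
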